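/- For any profile of matroidal valuations, both of the following sets are M-convex: S_1 = {(|A_0|,|A_1|,…,|A_n|) ∈ ℤ^{N∪{0}} : A is a clean allocation}, where A_0 is the set of unallocated items, and S_2 = {(|A_1|,…,|A_n|) ∈ ℤ^N : A is a clean utilitarian optimal allocation}. -/

import Mathlib

open Finset

/-- A matroidal valuation on the goods `Fin m`: a monotone submodular function
with `v ∅ = 0` whose marginal gains lie in `{0,1}`. -/
structure Matroidal (m : ℕ) where
  v : Finset (Fin m) → ℕ
  v_empty : v ∅ = 0
  mono : ∀ ⦃X Y : Finset (Fin m)⦄, X ⊆ Y → v X ≤ v Y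
  submodular : ∀ X Y : Finset (Fin m), v (X ∪ Y) + v (X ∩ Y) ≤ v X + v Y
  marginal : ∀ (X : Finset (Fin m)) (e : Fin m), v (insert e X) ≤ v X + 1

/-- An allocation: the bundles are pairwise disjoint. -/
def IsAllocation {n m : ℕ} (A : Fin n → Finset (Fin m)) : Prop :=
  ∀ i j : Fin n, i ≠ j → Disjoint (A i) (A j)

/-- An allocation is clean (for matroidal valuations) iff each bundle is independent. -/
def Clean {n m : ℕ} (P : Fin n → Matroidal m) (A : Fin n → Finset (Fin m)) : Prop :=
  ∀ i, (P i).v (A i) = (A i).card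

/-- A utilitarian optimal allocation. -/
def UtilOpt {n m : ℕ} (P : Fin n → Matroidal m) (A : Fin n → Finset (Fin m)) : Prop :=
  IsAllocation A ∧ ∀ B : Fin n → Finset (Fin m), IsAllocation B →
    ∑ i, (P i).v (B i) ≤ ∑ i, (P i).v (A i)

/-- The sum of the `k` smallest entries of `u`, as the minimum of all `k`-subset sums. -/
noncomputable def kSmallestSum {n : ℕ} (u : Fin n → ℕ) (k : ℕ) : ℕ :=
  sInf {s | ∃ S : Finset (Fin n), S.card = k ∧ s = ∑ i ∈ S, u i}

/-- `A` is Lorenz dominating: it is an allocation that Lorenz dominates every allocation. -/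
def LorenzDominating {n m : ℕ} (P : Fin n → Matroidal m) (A : Fin n → Finset (Fin m)) : Prop :=
  IsAllocation A ∧ ∀ B : Fin n → Finset (Fin m), IsAllocation B →
    ∀ k ≤ n, kSmallestSum (fun i => (P i).v (B i)) k ≤ kSmallestSum (fun i => (P i).v (A i)) k

/-- The set of clean Lorenz dominating allocations. -/
def cLD {n m : ℕ} (P : Fin n → Matroidal m) : Set (Fin n → Finset (Fin m)) :=
  {A | Clean P A ∧ LorenzDominating P A}

/-- `min_{B ∈ cLD(P)} |B_i|`. -/
noncomputable def minSize {n m : ℕ} (P : Fin n → Matroidal m) (i : Fin n) : ℕ :=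
  sInf {c | ∃ A ∈ cLD P, c = (A i).card}

/-- `max_{B ∈ cLD(P)} |B_i|`. -/
noncomputable def maxSize {n m : ℕ} (P : Fin n → Matroidal m) (i : Fin n) : ℕ :=
  sSup {c | ∃ A ∈ cLD P, c = (A i).card}

/-- The SE subsidy for agent `i` under allocation `A` and profile `P`. -/
noncomputable def sePay {n m : ℕ} (P : Fin n → Matroidal m) (A : Fin n → Finset (Fin m))
    (i : Fin n) : ℕ :=
  if (A i).card = minSize P i ∧ (A i).card < Finset.univ.sup (fun j => (A j).card) then 1 else 0

/-- Restriction of a matroidal valuation to a set `X`. -/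
def Matroidal.restrict {m : ℕ} (w : Matroidal m) (X : Finset (Fin m)) : Matroidal m where
  v Y := w.v (X ∩ Y)
  v_empty := by simp [w.v_empty]
  mono := fun {Y Z} h => w.mono (Finset.inter_subset_inter le_rfl h)
  submodular := fun Y Z => by
    have h := w.submodular (X ∩ Y) (X ∩ Z)
    have h1 : X ∩ (Y ∪ Z) = (X ∩ Y) ∪ (X ∩ Z) := Finset.inter_union_distrib_left X Y Z
    have h2 : X ∩ (Y ∩ Z) = (X ∩ Y) ∩ (X ∩ Z) := by
      ext a; simp [Finset.mem_inter]; tauto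
    simpa [h1, h2] using h
  marginal := fun Y e => by
    by_cases he : e ∈ X
    · have h1 : X ∩ insert e Y = insert e (X ∩ Y) := by
        ext a
        simp only [Finset.mem_inter, Finset.mem_insert]
        constructor
        · rintro ⟨ha, h⟩
          rcases h with rfl | hb
          · exact Or.inl rfl
          · exact Or.inr ⟨ha, hb⟩
        · rintro (rfl | ⟨ha, hb⟩)
          · exact ⟨he, Or.inl rfl⟩
          · exact ⟨ha, Or.inr hb⟩
      simpa [h1] using w.marginal (X ∩ Y) e
    · have h1 : X ∩ insert e Y = X ∩ Y := by
        ext a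
        simp only [Finset.mem_inter, Finset.mem_insert]
        constructor
        · rintro ⟨ha, (rfl | hb)⟩
          · exact absurd ha he
          · exact ⟨ha, hb⟩
        · rintro ⟨ha, hb⟩; exact ⟨ha, Or.inr hb⟩
      simp only [h1]
      exact Nat.le_succ _

/-- The set of unallocated items `A_0`. -/
def unalloc {n m : ℕ} (A : Fin n → Finset (Fin m)) : Finset (Fin m) :=
  Finset.univ \ Finset.univ.biUnion (fun i => A i)

/-- A nonempty set `S ⊆ ℤ^E` is M-convex if it satisfies the simultaneous
exchange property. -/
def MConvex {E : Type*} [DecidableEq E] (S : Set (E → ℤ)) : Prop :=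
  S.Nonempty ∧ ∀ x ∈ S, ∀ y ∈ S, ∀ i : E, y i < x i →
    ∃ j : E, x j < y j ∧
      (x - Pi.single i 1 + Pi.single j 1) ∈ S ∧
      (y + Pi.single i 1 - Pi.single j 1) ∈ S


open scoped Classical

structure RankFn (α : Type*) [DecidableEq α] where
  v : Finset α → ℕ
  v_empty : v ∅ = 0
  mono : ∀ ⦃X Y : Finset α⦄, X ⊆ Y → v X ≤ v Y
  submodular : ∀ X Y, v (X ∪ Y) + v (X ∩ Y) ≤ v X + v Y
  marginal : ∀ X e, v (insert e X) ≤ v X + 1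

namespace RankFn
variable {α : Type*} [DecidableEq α] (M : RankFn α)

def Indep (S : Finset α) : Prop := M.v S = S.card

theorem indep_empty : M.Indep ∅ := by simp [Indep, M.v_empty]

theorem v_union_le_card (S T : Finset α) : M.v (S ∪ T) ≤ M.v S + T.card := by
  classical
  induction T using Finset.induction_on with
  | empty => simp
  | @insert e T he ih =>
    have h3 : S ∪ insert e T = insert e (S ∪ T) := Finset.union_insert e S T
    rw [h3, card_insert_of_notMem he]
    calc M.v (insert e (S ∪ T)) ≤ M.v (S ∪ T) + 1 := M.marginal _ _
    _ ≤ M.v S + T.card + 1 := by omega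

theorem v_le_card (S : Finset α) : M.v S ≤ S.card := by
  have := M.v_union_le_card ∅ S
  simpa [M.v_empty] using this

theorem indep_subset {S T : Finset α} (hS : M.Indep S) (hTS : T ⊆ S) : M.Indep T := by
  have h2 : M.v S ≤ M.v T + (S \ T).card := by
    have := M.v_union_le_card T (S \ T)
    rwa [Finset.union_sdiff_of_subset hTS] at this
  have h3 : (S \ T).card = S.card - T.card := card_sdiff_of_subset hTS
  have h4 : T.card ≤ S.card := card_le_card hTS
  have h5 := M.v_le_card T
  unfold Indep at *
  omega

theorem insert_cases (S : Finset α) (e : α) :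
    M.v (insert e S) = M.v S ∨ M.v (insert e S) = M.v S + 1 := by
  have h1 := M.marginal S e
  have h2 := M.mono (subset_insert e S)
  omega

theorem indep_insert_of_not_eq {S : Finset α} (hS : M.Indep S) {e : α} (he : e ∉ S)
    (h : M.v (insert e S) ≠ M.v S) : M.Indep (insert e S) := by
  rcases M.insert_cases S e with h' | h'
  · exact absurd h' h
  · unfold Indep at *; rw [card_insert_of_notMem he]; omega

/-- monotonicity of closure: mem -/
theorem cl_mono {S T : Finset α} (hST : S ⊆ T) {u : α} (h : M.v (insert u S) = M.v S) :
    M.v (insert u T) = M.v T := by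
  have h1 := M.submodular T (insert u S)
  have h2 : T ∪ insert u S = insert u T := by
    ext a; simp only [mem_union, mem_insert]
    constructor
    · rintro (h | h | h) <;> [exact Or.inr h; exact Or.inl h; exact Or.inr (hST h)]
    · rintro (h | h); exacts [Or.inr (Or.inl h), Or.inl h]
  have h3 : S ⊆ T ∩ insert u S := by
    intro a ha; exact mem_inter.2 ⟨hST ha, mem_insert_of_mem ha⟩
  have h4 := M.mono h3
  have h5 := M.mono (subset_insert u T)
  rw [h2] at h1
  omega

/-- F3: spanning lemma -/
theorem v_union_eq_of_cl {S T : Finset α} (h : ∀ e ∈ T, M.v (insert e S) = M.v S) :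
    M.v (S ∪ T) = M.v S := by
  classical
  induction T using Finset.induction_on with
  | empty => simp
  | @insert e T hnm ih =>
    have hT : ∀ e ∈ T, M.v (insert e S) = M.v S := fun x hx => h x (mem_insert_of_mem hx)
    have h1 : M.v (S ∪ T) = M.v S := ih hT
    have h2 : M.v (insert e (S ∪ T)) = M.v (S ∪ T) :=
      M.cl_mono subset_union_left (h e (mem_insert_self e T))
    have h3 : S ∪ insert e T = insert e (S ∪ T) := Finset.union_insert e S T
    rw [h3, h2, h1]

theorem augment {X Y : Finset α} (hX : M.Indep X) (hY : M.Indep Y) (h : X.card < Y.card) :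
    ∃ e ∈ Y, e ∉ X ∧ M.Indep (insert e X) := by
  by_contra hc
  push_neg at hc
  have key : ∀ e ∈ Y, M.v (insert e X) = M.v X := by
    intro e he
    by_cases heX : e ∈ X
    · rw [insert_eq_self.2 heX]
    · rcases M.insert_cases X e with h' | h'
      · exact h'
      · exact absurd (M.indep_insert_of_not_eq hX heX (by omega)) (hc e he heX)
  have h1 := M.v_union_eq_of_cl key
  have h2 : M.v Y ≤ M.v (X ∪ Y) := M.mono subset_union_right
  unfold Indep at *
  omega

theorem insert_val_of_not_indep {S : Finset α} (hS : M.Indep S) {e : α} (he : e ∉ S)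
    (h : ¬ M.Indep (insert e S)) : M.v (insert e S) = M.v S := by
  rcases M.insert_cases S e with h' | h'
  · exact h'
  · exact absurd (M.indep_insert_of_not_eq hS he (by omega)) h

/-- the fundamental-circuit fact: if `X + u` is dependent, then `u` is spanned by the
set of elements of `X` that can be exchanged for `u`. -/
theorem fstar {X : Finset α} (hX : M.Indep X) {u : α} (hu : u ∉ X)
    (hdep : M.v (insert u X) = M.v X) :
    M.v (insert u (X.filter (fun w => M.Indep (insert u (X.erase w))))) =
      M.v (X.filter (fun w => M.Indep (insert u (X.erase w)))) := by
  classical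
  set F := X.powerset.filter (fun C => M.v (insert u C) = M.v C) with hF
  have hXF : X ∈ F := by simp [hF, hdep]
  obtain ⟨C, hCF, hCmin⟩ := Finset.exists_min_image F card ⟨X, hXF⟩
  simp only [hF, mem_filter, mem_powerset] at hCF
  obtain ⟨hCX, hCu⟩ := hCF
  have hCD : ∀ w ∈ C, M.Indep (insert u (X.erase w)) := by
    intro w hw
    by_contra hne
    have hwX : w ∈ X := hCX hw
    have hXe : M.Indep (X.erase w) := M.indep_subset hX (erase_subset w X)
    have huXe : u ∉ X.erase w := fun h => hu (mem_of_mem_erase h)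
    have hval : M.v (insert u (X.erase w)) = M.v (X.erase w) :=
      M.insert_val_of_not_indep hXe huXe hne
    -- minimality: C.erase w is not in F
    have hCew : M.v (insert u (C.erase w)) ≠ M.v (C.erase w) := by
      intro hcontra
      have hmem : C.erase w ∈ F := by
        simp only [hF, mem_filter, mem_powerset]
        exact ⟨(erase_subset w C).trans hCX, hcontra⟩
      have := hCmin _ hmem
      have := card_erase_lt_of_mem hw
      omega
    have hCind : M.Indep C := M.indep_subset hX hCX
    have hCe : M.Indep (C.erase w) := M.indep_subset hCind (erase_subset w C)
    have hv1 : M.v (insert u (C.erase w)) = M.v (C.erase w) + 1 := by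
      rcases M.insert_cases (C.erase w) u with h' | h'
      · exact absurd h' hCew
      · exact h'
    -- w ∈ cl (insert u (C.erase w))
    have hkey : M.v (insert w (insert u (C.erase w))) = M.v (insert u (C.erase w)) := by
      have hseteq : insert w (insert u (C.erase w)) = insert u C := by
        rw [Finset.insert_comm, insert_erase hw]
      rw [hseteq, hCu]
      have : M.v (C.erase w) = C.card - 1 := by
        rw [hCe]; exact card_erase_of_mem hw
      have hCcard : 1 ≤ C.card := card_pos.2 ⟨w, hw⟩
      rw [hCind] at *
      omega
    have hsub : insert u (C.erase w) ⊆ insert u (X.erase w) :=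
      insert_subset_insert u (erase_subset_erase w hCX)
    have hfin := M.cl_mono hsub hkey
    have hseteq2 : insert w (insert u (X.erase w)) = insert u X := by
      rw [Finset.insert_comm, insert_erase hwX]
    rw [hseteq2, hval, hdep] at hfin
    have hXe' : M.v (X.erase w) = X.card - 1 := by
      rw [hXe]; exact card_erase_of_mem hwX
    have hXcard : 1 ≤ X.card := card_pos.2 ⟨w, hwX⟩
    rw [hX] at hfin
    omega
  have hCsub : C ⊆ X.filter (fun w => M.Indep (insert u (X.erase w))) := by
    intro w hw; exact mem_filter.2 ⟨hCX hw, hCD w hw⟩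
  exact M.cl_mono hCsub hCu

/-- serial exchange along a shortcut-free sequence preserves independence. -/
theorem ns {I : Finset α} (hI : M.Indep I) {t : ℕ} (y z : Fin t → α)
    (hy : ∀ a, y a ∈ I) (hz : ∀ a, z a ∉ I)
    (h1 : ∀ a, M.Indep (insert (z a) (I.erase (y a))))
    (h2 : ∀ a b : Fin t, a < b → M.v (insert (z a) (I.erase (y b))) = M.v (I.erase (y b))) :
    M.Indep ((I \ Finset.image y univ) ∪ Finset.image z univ) := by
  classical
  by_contra hJ
  set J := (I \ Finset.image y univ) ∪ Finset.image z univ with hJdef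
  set F := J.powerset.filter (fun C => ¬ M.Indep C) with hF
  have hJF : J ∈ F := by simp [hF, hJ]
  obtain ⟨C, hCF, hCmin⟩ := Finset.exists_min_image F card ⟨J, hJF⟩
  simp only [hF, mem_filter, mem_powerset] at hCF
  obtain ⟨hCJ, hCdep⟩ := hCF
  have hCproper : ∀ w ∈ C, M.Indep (C.erase w) := by
    intro w hw
    by_contra hne
    have hmem : C.erase w ∈ F := by
      simp only [hF, mem_filter, mem_powerset]
      exact ⟨(erase_subset w C).trans hCJ, hne⟩
    have := hCmin _ hmem
    have := card_erase_lt_of_mem hw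
    omega
  have hBz : ∃ a, z a ∈ C := by
    by_contra hno
    push_neg at hno
    apply hCdep
    apply M.indep_subset hI
    intro w hw
    rcases mem_union.1 (hCJ hw) with h | h
    · exact (mem_sdiff.1 h).1
    · obtain ⟨a, _, rfl⟩ := mem_image.1 h
      exact absurd hw (hno a)
  set B := univ.filter (fun a => z a ∈ C) with hB
  obtain ⟨a0, ha0⟩ := hBz
  obtain ⟨b, hbB, hbmax⟩ := Finset.exists_max_image B (fun a => (a : ℕ))
    ⟨a0, by simp [hB, ha0]⟩
  have hzbC : z b ∈ C := (mem_filter.1 hbB).2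
  set S := I.erase (y b) with hS
  have hScard : S.card = I.card - 1 := card_erase_of_mem (hy b)
  have hSind : M.Indep S := M.indep_subset hI (erase_subset _ _)
  have hcl : ∀ w ∈ C.erase (z b), M.v (insert w S) = M.v S := by
    intro w hw
    have hwC : w ∈ C := mem_of_mem_erase hw
    have hwne : w ≠ z b := ne_of_mem_erase hw
    rcases mem_union.1 (hCJ hwC) with h | h
    · have hwI : w ∈ I := (mem_sdiff.1 h).1
      have hwny : w ∉ Finset.image y univ := (mem_sdiff.1 h).2
      have hwS : w ∈ S := by
        refine mem_erase.2 ⟨?_, hwI⟩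
        intro hcontra
        exact hwny (by rw [hcontra]; exact mem_image_of_mem y (mem_univ b))
      rw [insert_eq_self.2 hwS]
    · obtain ⟨a, _, rfl⟩ := mem_image.1 h
      have haB : a ∈ B := by simp [hB, hwC]
      have hab : a < b := by
        have h1' := hbmax a haB
        have h2' : a ≠ b := fun h => hwne (congrArg z h)
        have h3' : (a : ℕ) ≠ (b : ℕ) := fun h => h2' (Fin.ext h)
        exact Fin.lt_def.2 (lt_of_le_of_ne h1' h3')
      exact h2 a b hab
  have hUcl : M.v (S ∪ C.erase (z b)) = M.v S := M.v_union_eq_of_cl hcl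
  -- z b ∈ cl (C.erase (z b))
  have hCcv : M.v C = C.card - 1 := by
    have hub := M.v_le_card C
    have hne : M.v C ≠ C.card := hCdep
    have hCe : M.Indep (C.erase (z b)) := hCproper _ hzbC
    have h1' : M.v (C.erase (z b)) = C.card - 1 := by
      rw [hCe]; exact card_erase_of_mem hzbC
    have h2' := M.mono (erase_subset (z b) C)
    omega
  have hzbcl : M.v (insert (z b) (C.erase (z b))) = M.v (C.erase (z b)) := by
    rw [insert_erase hzbC, hCcv]
    have hCe : M.Indep (C.erase (z b)) := hCproper _ hzbC
    rw [hCe, card_erase_of_mem hzbC]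
  have hfin := M.cl_mono (subset_union_right : C.erase (z b) ⊆ S ∪ C.erase (z b)) hzbcl
  rw [hUcl] at hfin
  have hmono : M.v (insert (z b) S) ≤ M.v (insert (z b) (S ∪ C.erase (z b))) :=
    M.mono (insert_subset_insert _ subset_union_left)
  rw [hfin] at hmono
  have hzS : z b ∉ S := fun h => hz b (mem_of_mem_erase h)
  have hIcard : 1 ≤ I.card := card_pos.2 ⟨y b, hy b⟩
  have hind : M.Indep (insert (z b) S) := h1 b
  rw [Indep, card_insert_of_notMem hzS, hScard] at hind
  rw [hSind] at hmono
  rw [hScard] at hmono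
  omega

/-- symmetric basis exchange. -/
theorem sym_exchange {B₁ B₂ : Finset α} (h₁ : M.Indep B₁) (h₂ : M.Indep B₂)
    (hcard : B₁.card = B₂.card)
    (hmax : ∀ S, M.Indep S → S.card ≤ B₂.card)
    {e : α} (he₁ : e ∈ B₁) (he₂ : e ∉ B₂) :
    ∃ f ∈ B₂, f ∉ B₁ ∧ M.Indep (insert f (B₁.erase e)) ∧ M.Indep (insert e (B₂.erase f)) := by
  classical
  have hdep : ¬ M.Indep (insert e B₂) := by
    intro h
    have := hmax _ h
    rw [card_insert_of_notMem he₂] at this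
    omega
  have hval : M.v (insert e B₂) = M.v B₂ := M.insert_val_of_not_indep h₂ he₂ hdep
  set D := B₂.filter (fun w => M.Indep (insert e (B₂.erase w))) with hD
  have hfstar : M.v (insert e D) = M.v D := M.fstar h₂ he₂ hval
  have hB1e : M.Indep (B₁.erase e) := M.indep_subset h₁ (erase_subset _ _)
  have hB1ecard : (B₁.erase e).card = B₁.card - 1 := card_erase_of_mem he₁
  suffices hsuff : ∃ f ∈ D, f ∉ B₁ ∧ M.Indep (insert f (B₁.erase e)) by
    obtain ⟨f, hfD, hfB1, hfind⟩ := hsuff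
    have := mem_filter.1 hfD
    exact ⟨f, this.1, hfB1, hfind, this.2⟩
  by_contra hc
  push_neg at hc
  have hclaim : ∀ f ∈ D, M.v (insert f (B₁.erase e)) = M.v (B₁.erase e) := by
    intro f hfD
    have hfB2 : f ∈ B₂ := (mem_filter.1 hfD).1
    have hfe : f ≠ e := fun h => he₂ (h ▸ hfB2)
    by_cases hfB1 : f ∈ B₁
    · rw [insert_eq_self.2 (mem_erase.2 ⟨hfe, hfB1⟩)]
    · have hni := hc f hfD hfB1
      have hfnm : f ∉ B₁.erase e := fun h => hfB1 (mem_of_mem_erase h)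
      exact M.insert_val_of_not_indep hB1e hfnm hni
  have hUcl : M.v ((B₁.erase e) ∪ D) = M.v (B₁.erase e) := M.v_union_eq_of_cl hclaim
  have hfin := M.cl_mono (subset_union_right : D ⊆ B₁.erase e ∪ D) hfstar
  rw [hUcl] at hfin
  have hmono : M.v B₁ ≤ M.v (insert e ((B₁.erase e) ∪ D)) := by
    apply M.mono
    intro a ha
    by_cases hae : a = e
    · exact hae ▸ mem_insert_self _ _
    · exact mem_insert_of_mem (mem_union_left _ (mem_erase.2 ⟨hae, ha⟩))
  rw [hfin] at hmono
  rw [h₁, hB1e, hB1ecard] at hmono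
  have hB1card : 1 ≤ B₁.card := card_pos.2 ⟨e, he₁⟩
  omega

end RankFn

section Families
open RankFn

variable {K : Type*} [Fintype K] [DecidableEq K] {α : Type*} [Fintype α] [DecidableEq α]

def Feas (N : K → RankFn α) (c : K → ℕ) : Prop :=
  ∃ X : K → Finset α, (∀ k l, k ≠ l → Disjoint (X k) (X l)) ∧
    (∀ k, (N k).Indep (X k)) ∧ (∀ k, (X k).card = c k)

variable {N : K → RankFn α}

theorem feas_zero : Feas N (fun _ => 0) :=
  ⟨fun _ => ∅, fun _ _ _ => disjoint_empty_left _, fun k => (N k).indep_empty, fun _ => rfl⟩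

theorem feas_mono {c c' : K → ℕ} (hc : Feas N c) (hle : ∀ k, c' k ≤ c k) : Feas N c' := by
  obtain ⟨X, hdisj, hind, hcard⟩ := hc
  have hex : ∀ k, ∃ T ⊆ X k, T.card = c' k := by
    intro k
    exact Finset.exists_subset_card_eq (by rw [hcard k]; exact hle k)
  choose T hT hTcard using hex
  exact ⟨T, fun k l hkl => Finset.disjoint_of_subset_left (hT k)
      (Finset.disjoint_of_subset_right (hT l) (hdisj k l hkl)),
    fun k => (N k).indep_subset (hind k) (hT k), hTcard⟩

theorem feas_bound {c : K → ℕ} (hc : Feas N c) (k : K) : c k ≤ Fintype.card α := by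
  obtain ⟨X, _, _, hcard⟩ := hc
  rw [← hcard k]
  exact (card_le_univ _).trans (le_of_eq (Finset.card_univ))

theorem feas_total {c : K → ℕ} (hc : Feas N c) : ∑ k, c k ≤ Fintype.card α := by
  obtain ⟨X, hdisj, _, hcard⟩ := hc
  calc ∑ k, c k = ∑ k, (X k).card := by simp [hcard]
  _ = (univ.biUnion X).card := (Finset.card_biUnion (fun k _ l _ h => hdisj k l h)).symm
  _ ≤ Fintype.card α := (card_le_univ _).trans (le_of_eq (Finset.card_univ))

end Families
section Augment
open RankFn

variable {K : Type*} [Fintype K] [DecidableEq K] {α : Type*} [Fintype α] [DecidableEq α]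
variable {N : K → RankFn α}

theorem feas_augment {c c' : K → ℕ} (hc : Feas N c) (hc' : Feas N c')
    (hlt : ∑ k, c k < ∑ k, c' k) :
    ∃ k, c k < c' k ∧ Feas N (Function.update c k (c k + 1)) := by
  classical
  obtain ⟨X, hXdisj, hXind, hXcard⟩ := hc
  obtain ⟨Y, hYdisj, hYind, hYcard⟩ := hc'
  set Arc : α → α → Prop := fun u w =>
    ∃ k, w ∈ X k ∧ u ∉ X k ∧ (N k).Indep (insert u ((X k).erase w)) with hArc
  set S₀ : Finset α := univ \ univ.biUnion X with hS₀
  set Good : α → Prop := fun u =>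
    ∃ k, c k < c' k ∧ u ∉ X k ∧ (N k).Indep (insert u (X k)) with hGood
  have colUniq : ∀ {w : α} {k l : K}, w ∈ X k → w ∈ X l → k = l := by
    intro w k l hk hl
    by_contra hkl
    have := (hXdisj k l hkl).le_bot (mem_inter.2 ⟨hk, hl⟩)
    simp at this
  set P : ℕ → Prop := fun ℓ => ∃ z : ℕ → α, z 0 ∈ S₀ ∧
    (∀ i, i < ℓ → Arc (z i) (z (i+1))) ∧ Good (z ℓ) with hP
  by_cases hpath : ∃ ℓ, P ℓ
  · -- an augmenting path exists
    obtain ⟨ℓ, hmin, z, hz0, harc, hgood⟩ :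
        ∃ ℓ, (∀ ℓ' < ℓ, ¬ P ℓ') ∧ ∃ z : ℕ → α, z 0 ∈ S₀ ∧
          (∀ i, i < ℓ → Arc (z i) (z (i+1))) ∧ Good (z ℓ) := by
      refine ⟨Nat.find hpath, fun ℓ' h => Nat.find_min hpath h, Nat.find_spec hpath⟩
    have notGood : ∀ i, i < ℓ → ¬ Good (z i) := by
      intro i hi hg
      exact hmin i hi ⟨z, hz0, fun t ht => harc t (by omega), hg⟩
    have hshort : ∀ i j, i + 1 < j → j ≤ ℓ → ¬ Arc (z i) (z j) := by
      intro i j hij hjl harcij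
      set d := j - i - 1 with hd
      apply hmin (ℓ - d) (by omega)
      refine ⟨fun t => if t ≤ i then z t else z (t + d), by simpa using hz0, ?_, ?_⟩
      · intro t ht
        show Arc (if t ≤ i then z t else z (t + d)) (if t + 1 ≤ i then z (t + 1) else z (t + 1 + d))
        by_cases h1 : t + 1 ≤ i
        · rw [if_pos (by omega : t ≤ i), if_pos h1]
          exact harc t (by omega)
        · by_cases h2 : t = i
          · subst h2
            rw [if_pos (le_refl t), if_neg h1]
            have he : t + 1 + d = j := by omega
            rw [he]
            exact harcij
          · rw [if_neg (by omega : ¬ t ≤ i), if_neg h1]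
            have he : t + 1 + d = (t + d) + 1 := by omega
            rw [he]
            exact harc (t + d) (by omega)
      · show Good (if ℓ - d ≤ i then z (ℓ - d) else z (ℓ - d + d))
        rw [if_neg (by omega : ¬ ℓ - d ≤ i)]
        have he : ℓ - d + d = ℓ := by omega
        rw [he]
        exact hgood
    have hinj : ∀ i j, i < j → j ≤ ℓ → z i ≠ z j := by
      intro i j hij hjl heq
      by_cases hjℓ : j = ℓ
      · exact notGood i (by omega) (by rw [heq, hjℓ]; exact hgood)
      · have harcj : Arc (z j) (z (j+1)) := harc j (by omega)
        rw [← heq] at harcj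
        exact hshort i (j+1) (by omega) (by omega) harcj
    obtain ⟨ks, hks1, hks2, hks3⟩ := hgood
    have harc' : ∀ i : Fin ℓ, ∃ k, z ((i : ℕ)+1) ∈ X k ∧ z (i : ℕ) ∉ X k ∧
        (N k).Indep (insert (z (i : ℕ)) ((X k).erase (z ((i : ℕ)+1)))) :=
      fun i => harc i i.2
    choose kk hkk1 hkk2 hkk3 using harc'
    have hz0X : ∀ k, z 0 ∉ X k := by
      intro k hk
      have := (mem_sdiff.1 hz0).2
      exact this (mem_biUnion.2 ⟨k, mem_univ k, hk⟩)
    have hziX : ∀ i : ℕ, i ≤ ℓ → ∀ k, z i ∈ X k →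
        ∃ j : Fin ℓ, (j : ℕ) + 1 = i ∧ kk j = k := by
      intro i hi k hik
      rcases Nat.eq_zero_or_pos i with rfl | hipos
      · exact absurd hik (hz0X k)
      · have hlt : i - 1 < ℓ := by omega
        refine ⟨⟨i - 1, hlt⟩, by simp; omega, ?_⟩
        have h1 := hkk1 ⟨i - 1, hlt⟩
        have h2 : ((⟨i - 1, hlt⟩ : Fin ℓ) : ℕ) + 1 = i := by simp; omega
        rw [h2] at h1
        exact colUniq h1 hik
    set Pos : K → Finset (Fin ℓ) := fun k => univ.filter (fun i => kk i = k) with hPos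
    set Rem : K → Finset α := fun k => (Pos k).image (fun i : Fin ℓ => z ((i : ℕ)+1)) with hRem
    set Add : K → Finset α := fun k => (Pos k).image (fun i : Fin ℓ => z (i : ℕ)) with hAdd
    set B' : K → Finset α := fun k => (X k \ Rem k) ∪ Add k with hB'
    set X' : K → Finset α := fun k => if k = ks then insert (z ℓ) (B' k) else B' k with hX'
    have hRemsub : ∀ k, Rem k ⊆ X k := by
      intro k a ha
      obtain ⟨i, hi, rfl⟩ := mem_image.1 ha
      have : kk i = k := (mem_filter.1 hi).2
      exact this ▸ hkk1 i
    have hNS : ∀ k, (N k).Indep (B' k) := by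
      intro k
      set t := (Pos k).card with ht
      set e := (Pos k).orderIsoOfFin rfl with he
      have hek : ∀ a : Fin t, kk ((e a : Fin ℓ)) = k := fun a => (mem_filter.1 (e a).2).2
      have hNS0 := (N k).ns (hXind k)
        (fun a : Fin t => z (((e a : Fin ℓ) : ℕ) + 1))
        (fun a : Fin t => z ((e a : Fin ℓ) : ℕ))
        (fun a => by have h := hkk1 ((e a : Fin ℓ)); rw [hek a] at h; exact h)
        (fun a => by have h := hkk2 ((e a : Fin ℓ)); rw [hek a] at h; exact h)
        (fun a => by have h := hkk3 ((e a : Fin ℓ)); rw [hek a] at h; exact h)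
        ?_
      · have h1 : Finset.image (fun a : Fin t => z (((e a : Fin ℓ) : ℕ) + 1)) univ = Rem k := by
          apply Finset.Subset.antisymm
          · intro w hw
            obtain ⟨a, -, rfl⟩ := mem_image.1 hw
            exact mem_image.2 ⟨(e a : Fin ℓ), (e a).2, rfl⟩
          · intro w hw
            obtain ⟨i, hi, rfl⟩ := mem_image.1 hw
            exact mem_image.2 ⟨e.symm ⟨i, hi⟩, mem_univ _, by rw [OrderIso.apply_symm_apply]⟩
        have h2 : Finset.image (fun a : Fin t => z ((e a : Fin ℓ) : ℕ)) univ = Add k := by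
          apply Finset.Subset.antisymm
          · intro w hw
            obtain ⟨a, -, rfl⟩ := mem_image.1 hw
            exact mem_image.2 ⟨(e a : Fin ℓ), (e a).2, rfl⟩
          · intro w hw
            obtain ⟨i, hi, rfl⟩ := mem_image.1 hw
            exact mem_image.2 ⟨e.symm ⟨i, hi⟩, mem_univ _, by rw [OrderIso.apply_symm_apply]⟩
        rw [h1, h2] at hNS0
        exact hNS0
      · intro a b hab
        have hij : ((e a : Fin ℓ) : ℕ) < ((e b : Fin ℓ) : ℕ) := by
          exact_mod_cast e.strictMono hab
        show (N k).v (insert (z ((e a : Fin ℓ) : ℕ))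
            ((X k).erase (z (((e b : Fin ℓ) : ℕ) + 1)))) =
          (N k).v ((X k).erase (z (((e b : Fin ℓ) : ℕ) + 1)))
        have hmem1 : z (((e b : Fin ℓ) : ℕ) + 1) ∈ X k := by
          have h := hkk1 ((e b : Fin ℓ)); rwa [hek b] at h
        have hmem2 : z ((e a : Fin ℓ) : ℕ) ∉ X k := by
          have h := hkk2 ((e a : Fin ℓ)); rwa [hek a] at h
        have hjl : (((e b : Fin ℓ) : ℕ)) + 1 ≤ ℓ := ((e b : Fin ℓ)).2
        have hnind : ¬ (N k).Indep (insert (z ((e a : Fin ℓ) : ℕ))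
            ((X k).erase (z (((e b : Fin ℓ) : ℕ) + 1)))) := by
          intro hind
          exact hshort _ _ (by omega) (by omega) ⟨k, hmem1, hmem2, hind⟩
        exact (N k).insert_val_of_not_indep
          ((N k).indep_subset (hXind k) (erase_subset _ _))
          (fun hmem => hmem2 (mem_of_mem_erase hmem)) hnind
    have hAddX : ∀ k a, a ∈ Add k → a ∉ X k := by
      intro k a ha
      obtain ⟨i, hi, rfl⟩ := mem_image.1 ha
      have : kk i = k := (mem_filter.1 hi).2
      exact this ▸ hkk2 i
    have hzℓB' : z ℓ ∉ B' ks := by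
      intro h
      rcases mem_union.1 h with h | h
      · exact hks2 (mem_sdiff.1 h).1
      · obtain ⟨i, _, heq⟩ := mem_image.1 h
        exact hinj i ℓ i.2 le_rfl heq
    have hins : (N ks).Indep (insert (z ℓ) (B' ks)) := by
      rcases (N ks).insert_cases (B' ks) (z ℓ) with hcase | hcase
      · exfalso
        set W := X ks ∪ (univ : Finset (Fin ℓ)).image (fun i : Fin ℓ => z (i : ℕ)) with hW
        have hWcl : ∀ w ∈ (univ : Finset (Fin ℓ)).image (fun i : Fin ℓ => z (i : ℕ)),
            (N ks).v (insert w (X ks)) = (N ks).v (X ks) := by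
          intro w hw
          obtain ⟨i, _, rfl⟩ := mem_image.1 hw
          by_cases hzi : z (i : ℕ) ∈ X ks
          · rw [insert_eq_self.2 hzi]
          · have hni : ¬ (N ks).Indep (insert (z (i : ℕ)) (X ks)) :=
              fun h => notGood i i.2 ⟨ks, hks1, hzi, h⟩
            exact (N ks).insert_val_of_not_indep (hXind ks) hzi hni
        have hWv : (N ks).v W = (N ks).v (X ks) := (N ks).v_union_eq_of_cl hWcl
        have hB'W : B' ks ⊆ W := by
          intro a ha
          rcases mem_union.1 ha with h | h
          · exact mem_union_left _ (mem_sdiff.1 h).1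
          · apply mem_union_right
            obtain ⟨i, _, rfl⟩ := mem_image.1 h
            exact mem_image.2 ⟨i, mem_univ i, rfl⟩
        have h2 := (N ks).cl_mono hB'W hcase
        have h3 : (N ks).v (insert (z ℓ) (X ks)) ≤ (N ks).v (insert (z ℓ) W) :=
          (N ks).mono (insert_subset_insert _ subset_union_left)
        rw [h2, hWv] at h3
        have h4 : (N ks).v (insert (z ℓ) (X ks)) = (X ks).card + 1 := by
          rw [hks3, card_insert_of_notMem hks2]
        have h5 : (N ks).v (X ks) = (X ks).card := hXind ks
        omega
      · exact (N ks).indep_insert_of_not_eq (hNS ks) hzℓB' (by omega)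
    -- cardinalities
    have hPosinj : ∀ k, Set.InjOn (fun i : Fin ℓ => z ((i : ℕ) + 1)) (Pos k) := by
      intro k i hi j hj heq
      by_contra hne
      rcases lt_or_gt_of_ne (fun h : (i : ℕ) = (j : ℕ) => hne (Fin.ext h)) with h | h
      · exact hinj ((i : ℕ)+1) ((j : ℕ)+1) (by omega) j.2 heq
      · exact hinj ((j : ℕ)+1) ((i : ℕ)+1) (by omega) i.2 heq.symm
    have hPosinj2 : ∀ k, Set.InjOn (fun i : Fin ℓ => z (i : ℕ)) (Pos k) := by
      intro k i hi j hj heq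
      by_contra hne
      rcases lt_or_gt_of_ne (fun h : (i : ℕ) = (j : ℕ) => hne (Fin.ext h)) with h | h
      · exact hinj (i : ℕ) (j : ℕ) h (le_of_lt j.2) heq
      · exact hinj (j : ℕ) (i : ℕ) h (le_of_lt i.2) heq.symm
    have hcardB : ∀ k, (B' k).card = c k := by
      intro k
      have h1 : (Rem k).card = (Pos k).card := Finset.card_image_of_injOn (hPosinj k)
      have h2 : (Add k).card = (Pos k).card := Finset.card_image_of_injOn (hPosinj2 k)
      have h3 : Disjoint (X k \ Rem k) (Add k) := by
        rw [Finset.disjoint_right]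
        intro a ha
        intro hmem
        exact hAddX k a ha (mem_sdiff.1 hmem).1
      have h4 : (Rem k).card ≤ (X k).card := card_le_card (hRemsub k)
      rw [card_union_of_disjoint h3, card_sdiff_of_subset (hRemsub k), h1, h2, ← hXcard k]
      omega
    have hcardX' : ∀ k, (X' k).card = Function.update c ks (c ks + 1) k := by
      intro k
      by_cases h : k = ks
      · subst h
        simp only [hX', if_pos rfl]
        rw [card_insert_of_notMem hzℓB', hcardB, Function.update_self]
      · simp only [hX', if_neg h]
        rw [hcardB, Function.update_of_ne h]
    -- membership characterization
    have hmemX' : ∀ k a, a ∈ X' k →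
        (a ∈ X k ∧ a ∉ Rem k) ∨ (∃ i : Fin ℓ, kk i = k ∧ a = z (i : ℕ)) ∨
          (k = ks ∧ a = z ℓ) := by
      intro k a ha
      have hmain : a ∈ B' k →
          (a ∈ X k ∧ a ∉ Rem k) ∨ (∃ i : Fin ℓ, kk i = k ∧ a = z (i : ℕ)) := by
        intro hb
        rcases mem_union.1 hb with h | h
        · exact Or.inl ⟨(mem_sdiff.1 h).1, (mem_sdiff.1 h).2⟩
        · obtain ⟨i, hi, rfl⟩ := mem_image.1 h
          exact Or.inr ⟨i, (mem_filter.1 hi).2, rfl⟩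
      simp only [hX'] at ha
      by_cases h : k = ks
      · rw [if_pos h] at ha
        rcases mem_insert.1 ha with rfl | ha'
        · exact Or.inr (Or.inr ⟨h, rfl⟩)
        · rcases hmain ha' with h' | h'
          exacts [Or.inl h', Or.inr (Or.inl h')]
      · rw [if_neg h] at ha
        rcases hmain ha with h' | h'
        exacts [Or.inl h', Or.inr (Or.inl h')]
    have hXnotRem : ∀ k a, a ∈ X k → a ∉ Rem k → ∀ i : ℕ, i ≤ ℓ → a ≠ z i := by
      intro k a haX haR i hi heq
      subst heq
      obtain ⟨j, hj1, hj2⟩ := hziX i hi k haX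
      apply haR
      rw [hRem]
      refine mem_image.2 ⟨j, ?_, by rw [hj1]⟩
      simp [hPos, hj2]
    have hdisj' : ∀ k l, k ≠ l → Disjoint (X' k) (X' l) := by
      intro k l hkl
      rw [Finset.disjoint_left]
      intro a hak hal
      rcases hmemX' k a hak with ⟨h1, h2⟩ | ⟨i, hik, rfl⟩ | ⟨rfl, rfl⟩
      · rcases hmemX' l a hal with ⟨h3, h4⟩ | ⟨i, hil, rfl⟩ | ⟨rfl, rfl⟩
        · exact hkl (colUniq h1 h3)
        · exact hXnotRem k _ h1 h2 (i : ℕ) (le_of_lt i.2) rfl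
        · exact hXnotRem k _ h1 h2 ℓ le_rfl rfl
      · rcases hmemX' l _ hal with ⟨h3, h4⟩ | ⟨j, hjl, heq⟩ | ⟨rfl, heq⟩
        · exact hXnotRem l _ h3 h4 (i : ℕ) (le_of_lt i.2) rfl
        · have : i = j := by
            by_contra hne
            rcases lt_or_gt_of_ne (fun h : (i : ℕ) = (j : ℕ) => hne (Fin.ext h)) with h | h
            · exact hinj _ _ h (le_of_lt j.2) heq
            · exact hinj _ _ h (le_of_lt i.2) heq.symm
          exact hkl (by rw [← hik, ← hjl, this])
        · exact hinj (i : ℕ) ℓ i.2 le_rfl heq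
      · rcases hmemX' l _ hal with ⟨h3, h4⟩ | ⟨j, hjl, heq⟩ | ⟨rfl, heq⟩
        · exact hXnotRem l _ h3 h4 ℓ le_rfl rfl
        · exact hinj (j : ℕ) ℓ j.2 le_rfl heq.symm
        · exact hkl rfl
    have hindX' : ∀ k, (N k).Indep (X' k) := by
      intro k
      simp only [hX']
      by_cases h : k = ks
      · subst h; rw [if_pos rfl]; exact hins
      · rw [if_neg h]; exact hNS k
    exact ⟨ks, hks1, X', hdisj', hindX', hcardX'⟩
  · -- no augmenting path: counting contradiction
    exfalso
    push_neg at hpath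
    set R : Finset α := univ.filter (fun u => ∃ u₀ ∈ S₀, Relation.ReflTransGen Arc u₀ u)
      with hR
    have hS₀R : S₀ ⊆ R := fun u hu =>
      mem_filter.2 ⟨mem_univ u, ⟨u, hu, Relation.ReflTransGen.refl⟩⟩
    have hclosed : ∀ {u w}, u ∈ R → Arc u w → w ∈ R := by
      intro u w hu harc
      obtain ⟨u₀, hu₀, hrtg⟩ := (mem_filter.1 hu).2
      exact mem_filter.2 ⟨mem_univ w, ⟨u₀, hu₀, hrtg.tail harc⟩⟩
    have hnoGood : ∀ u ∈ R, ¬ Good u := by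
      intro u hu hgood
      obtain ⟨u₀, hu₀, hrtg⟩ := (mem_filter.1 hu).2
      -- build a path from the reflexive-transitive chain
      have : ∀ v w : α, Relation.ReflTransGen Arc v w → Good w → ∃ ℓ, ∃ z : ℕ → α,
          z 0 = v ∧ (∀ i, i < ℓ → Arc (z i) (z (i+1))) ∧ Good (z ℓ) := by
        intro v w hvw hgw
        induction hvw using Relation.ReflTransGen.head_induction_on with
        | refl => exact ⟨0, fun _ => w, rfl, fun i hi => absurd hi (by omega), hgw⟩
        | head harc _ ih =>
          rename_i a b _
          obtain ⟨ℓ, z, hz0, hzarc, hzgood⟩ := ih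
          refine ⟨ℓ + 1, fun t => if t = 0 then a else z (t - 1), rfl, ?_, by simpa⟩
          intro i hi
          rcases Nat.eq_zero_or_pos i with rfl | hipos
          · simpa [hz0] using harc
          · have h1 : ¬ (i = 0) := by omega
            have h2 : ¬ (i + 1 = 0) := by omega
            simp only [if_neg h1, if_neg h2]
            have : i - 1 + 1 = i := by omega
            rw [show i + 1 - 1 = (i-1) + 1 by omega, ← this]
            exact hzarc (i-1) (by omega)
      obtain ⟨ℓ, z, hz0, hzarc, hzgood⟩ := this u₀ u hrtg hgood
      exact hpath ℓ ⟨z, hz0 ▸ hu₀, hzarc, hzgood⟩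
    -- per-colour inequality
    have hYR : ∀ k, ((Y k) ∩ R).card ≤ ((X k) ∩ R).card := by
      intro k
      by_cases hopen : ∃ u ∈ R, u ∉ X k ∧ (N k).Indep (insert u (X k))
      · obtain ⟨u, huR, huX, huind⟩ := hopen
        have hkc : ¬ c k < c' k := fun h => hnoGood u huR ⟨k, h, huX, huind⟩
        have hXR : X k ⊆ R := by
          intro w hw
          refine hclosed huR ⟨k, hw, huX, ?_⟩
          exact (N k).indep_subset huind (insert_subset_insert u (erase_subset _ _))
        calc ((Y k) ∩ R).card ≤ (Y k).card := card_le_card inter_subset_left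
        _ = c' k := hYcard k
        _ ≤ c k := by omega
        _ = (X k).card := (hXcard k).symm
        _ = ((X k) ∩ R).card := by rw [inter_eq_left.2 hXR]
      · push_neg at hopen
        set B := (X k) ∩ R with hB
        have hBind : (N k).Indep B := (N k).indep_subset (hXind k) inter_subset_left
        have hcl : ∀ u ∈ R, (N k).v (insert u B) = (N k).v B := by
          intro u huR
          by_cases huX : u ∈ X k
          · rw [insert_eq_self.2 (mem_inter.2 ⟨huX, huR⟩)]
          · have hni := hopen u huR huX
            have hval : (N k).v (insert u (X k)) = (N k).v (X k) :=
              (N k).insert_val_of_not_indep (hXind k) huX hni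
            have hfst := (N k).fstar (hXind k) huX hval
            set D := (X k).filter (fun w => (N k).Indep (insert u ((X k).erase w))) with hD
            have hDB : D ⊆ B := by
              intro w hw
              have hw1 := mem_filter.1 hw
              exact mem_inter.2 ⟨hw1.1, hclosed huR ⟨k, hw1.1, huX, hw1.2⟩⟩
            exact (N k).cl_mono hDB hfst
        have hUcl : (N k).v (B ∪ R) = (N k).v B := (N k).v_union_eq_of_cl hcl
        have hYk : (N k).Indep ((Y k) ∩ R) := (N k).indep_subset (hYind k) inter_subset_left
        calc ((Y k) ∩ R).card = (N k).v ((Y k) ∩ R) := hYk.symm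
        _ ≤ (N k).v (B ∪ R) := (N k).mono (fun a ha => mem_union_right _ (mem_inter.1 ha).2)
        _ = (N k).v B := hUcl
        _ = B.card := hBind
    -- counting
    have hsplit : ∀ (Z : K → Finset α), ∀ k, (Z k).card = (Z k ∩ R).card + (Z k \ R).card := by
      intro Z k
      rw [← card_union_of_disjoint (disjoint_sdiff_inter _ _).symm]
      congr 1
      ext a; simp only [mem_union, mem_inter, mem_sdiff]; tauto
    have hYU : ∑ k, ((Y k) \ R).card ≤ (univ \ R).card := by
      rw [← Finset.card_biUnion]
      · apply card_le_card
        intro a ha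
        obtain ⟨k, _, hk⟩ := mem_biUnion.1 ha
        exact mem_sdiff.2 ⟨mem_univ a, (mem_sdiff.1 hk).2⟩
      · intro k _ l _ hkl
        exact Finset.disjoint_of_subset_left sdiff_subset
          (Finset.disjoint_of_subset_right sdiff_subset (hYdisj k l hkl))
    have hXU : (univ \ R).card ≤ ∑ k, ((X k) \ R).card := by
      rw [← Finset.card_biUnion (fun k _ l _ hkl => Finset.disjoint_of_subset_left sdiff_subset
          (Finset.disjoint_of_subset_right sdiff_subset (hXdisj k l hkl)))]
      apply card_le_card
      intro a ha
      have haR : a ∉ R := (mem_sdiff.1 ha).2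
      have haX : a ∈ univ.biUnion X := by
        by_contra hax
        exact haR (hS₀R (mem_sdiff.2 ⟨mem_univ a, hax⟩))
      obtain ⟨k, _, hk⟩ := mem_biUnion.1 haX
      exact mem_biUnion.2 ⟨k, mem_univ k, mem_sdiff.2 ⟨hk, haR⟩⟩
    have : ∑ k, c' k ≤ ∑ k, c k := by
      calc ∑ k, c' k = ∑ k, (Y k).card := by simp [hYcard]
      _ = ∑ k, (((Y k) ∩ R).card + ((Y k) \ R).card) := by
          apply Finset.sum_congr rfl; intro k _; exact hsplit Y k
      _ = ∑ k, ((Y k) ∩ R).card + ∑ k, ((Y k) \ R).card := Finset.sum_add_distrib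
      _ ≤ ∑ k, ((X k) ∩ R).card + ∑ k, ((X k) \ R).card := by
          have h1 := Finset.sum_le_sum (fun k (_ : k ∈ univ) => hYR k)
          have h2 := hYU.trans hXU
          omega
      _ = ∑ k, (((X k) ∩ R).card + ((X k) \ R).card) := Finset.sum_add_distrib.symm
      _ = ∑ k, (X k).card := by
          apply Finset.sum_congr rfl; intro k _; exact (hsplit X k).symm
      _ = ∑ k, c k := by simp [hXcard]
    omega

end Augment

section RankOf
open RankFn
variable {β : Type*} [Fintype β] [DecidableEq β]
variable (Ind : Finset β → Prop)

noncomputable def rankOf (S : Finset β) : ℕ :=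
  (S.powerset.filter (fun T => Ind T)).sup card

variable {Ind}

theorem rankOf_le {S T : Finset β} (hT : T ⊆ S) (hI : Ind T) : T.card ≤ rankOf Ind S :=
  Finset.le_sup (mem_filter.2 ⟨mem_powerset.2 hT, hI⟩)

theorem rankOf_le_card (hempty : Ind ∅) (S : Finset β) : rankOf Ind S ≤ S.card := by
  apply Finset.sup_le
  intro T hT
  exact card_le_card (mem_powerset.1 (mem_filter.1 hT).1)

theorem rankOf_exists (hempty : Ind ∅) (S : Finset β) :
    ∃ B ⊆ S, Ind B ∧ B.card = rankOf Ind S := by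
  have hne : (S.powerset.filter (fun T => Ind T)).Nonempty :=
    ⟨∅, mem_filter.2 ⟨mem_powerset.2 (empty_subset S), hempty⟩⟩
  obtain ⟨B, hB, hBmax⟩ := Finset.exists_mem_eq_sup _ hne card
  have h1 := mem_filter.1 hB
  exact ⟨B, mem_powerset.1 h1.1, h1.2, hBmax.symm⟩

theorem rankOf_mono (hempty : Ind ∅) {S T : Finset β} (hST : S ⊆ T) :
    rankOf Ind S ≤ rankOf Ind T := by
  apply Finset.sup_le
  intro U hU
  have h1 := mem_filter.1 hU
  exact rankOf_le ((mem_powerset.1 h1.1).trans hST) h1.2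

/-- extension of an independent set to a basis of `S`. -/
theorem rankOf_extend (hempty : Ind ∅)
    (haug : ∀ X Y, Ind X → Ind Y → X.card < Y.card → ∃ e ∈ Y, e ∉ X ∧ Ind (insert e X))
    {I S : Finset β} (hIS : I ⊆ S) (hI : Ind I) :
    ∃ B, I ⊆ B ∧ B ⊆ S ∧ Ind B ∧ B.card = rankOf Ind S := by
  classical
  obtain ⟨B, hBmem, hBmax⟩ := Finset.exists_max_image
    ((S.powerset.filter (fun T => Ind T)).filter (fun T => I ⊆ T)) card
    ⟨I, by simp only [mem_filter, mem_powerset]; exact ⟨⟨hIS, hI⟩, le_refl I⟩⟩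
  simp only [mem_filter, mem_powerset] at hBmem
  obtain ⟨⟨hBS, hBInd⟩, hIB⟩ := hBmem
  refine ⟨B, hIB, hBS, hBInd, ?_⟩
  have hle : B.card ≤ rankOf Ind S := rankOf_le hBS hBInd
  rcases eq_or_lt_of_le hle with h | h
  · exact h
  · exfalso
    obtain ⟨B', hB'S, hB'Ind, hB'card⟩ := rankOf_exists hempty S
    obtain ⟨e, heB', heB, hind⟩ := haug B B' hBInd hB'Ind (by omega)
    have : insert e B ∈ (S.powerset.filter (fun T => Ind T)).filter (fun T => I ⊆ T) := by
      simp only [mem_filter, mem_powerset]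
      exact ⟨⟨insert_subset (hB'S heB') hBS, hind⟩, hIB.trans (subset_insert e B)⟩
    have := hBmax _ this
    rw [card_insert_of_notMem heB] at this
    omega

noncomputable def rankFnOf (Ind : Finset β → Prop) (hempty : Ind ∅)
    (hdown : ∀ S T, Ind S → T ⊆ S → Ind T)
    (haug : ∀ X Y, Ind X → Ind Y → X.card < Y.card → ∃ e ∈ Y, e ∉ X ∧ Ind (insert e X)) :
    RankFn β where
  v := rankOf Ind
  v_empty := by
    have h1 := rankOf_le_card hempty (∅ : Finset β)
    simpa using h1
  mono := fun {S T} h => rankOf_mono hempty h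
  submodular := by
    intro A B
    obtain ⟨I, hIsub, hIind, hIcard⟩ := rankOf_exists hempty (A ∩ B)
    have hIAB : I ⊆ A ∪ B := hIsub.trans ((inter_subset_left).trans subset_union_left)
    obtain ⟨C, hIC, hCsub, hCind, hCcard⟩ := rankOf_extend hempty haug hIAB hIind
    have hA : (C ∩ A).card ≤ rankOf Ind A :=
      rankOf_le inter_subset_right (hdown _ _ hCind inter_subset_left)
    have hB : (C ∩ B).card ≤ rankOf Ind B :=
      rankOf_le inter_subset_right (hdown _ _ hCind inter_subset_left)
    have hcards : (C ∩ A).card + (C ∩ B).card = C.card + (C ∩ (A ∩ B)).card := by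
      have h1 : (C ∩ A) ∪ (C ∩ B) = C := by
        rw [← Finset.inter_union_distrib_left]
        exact inter_eq_left.2 hCsub
      have h2 : (C ∩ A) ∩ (C ∩ B) = C ∩ (A ∩ B) := by
        ext a; simp only [mem_inter]; tauto
      have := Finset.card_union_add_card_inter (C ∩ A) (C ∩ B)
      rw [h1, h2] at this
      omega
    have hIC2 : I.card ≤ (C ∩ (A ∩ B)).card :=
      card_le_card (fun a ha => mem_inter.2 ⟨hIC ha, hIsub ha⟩)
    omega
  marginal := by
    intro S e
    obtain ⟨B, hBsub, hBind, hBcard⟩ := rankOf_exists hempty (insert e S)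
    have h1 : Ind (B.erase e) := hdown _ _ hBind (erase_subset _ _)
    have h2 : B.erase e ⊆ S := by
      intro a ha
      have := hBsub (mem_of_mem_erase ha)
      rcases mem_insert.1 this with rfl | h
      · exact absurd rfl (ne_of_mem_erase ha)
      · exact h
    have h3 := rankOf_le h2 h1
    have h4 : B.card - 1 ≤ (B.erase e).card := by
      rcases em (e ∈ B) with h | h
      · rw [card_erase_of_mem h]
      · rw [erase_eq_of_notMem h]; omega
    omega

end RankOf

theorem rankOf_indep_iff {β : Type*} [Fintype β] [DecidableEq β] {Ind : Finset β → Prop}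
    (hempty : Ind ∅) (S : Finset β) : Ind S ↔ rankOf Ind S = S.card := by
  constructor
  · intro hS
    exact le_antisymm (rankOf_le_card hempty S) (rankOf_le Finset.Subset.rfl hS)
  · intro h
    obtain ⟨B, hBS, hBind, hBcard⟩ := rankOf_exists hempty S
    have : B = S := Finset.eq_of_subset_of_card_le hBS (by omega)
    exact this ▸ hBind

section CountExchange
open RankFn

variable {K : Type*} [Fintype K] [DecidableEq K] {α : Type*} [Fintype α] [DecidableEq α]

def countOf {M : ℕ} (s : Finset (K × Fin M)) (k : K) : ℕ :=
  (s.filter (fun p => p.1 = k)).card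

theorem card_eq_sum_countOf {M : ℕ} (s : Finset (K × Fin M)) :
    s.card = ∑ k, countOf s k :=
  Finset.card_eq_sum_card_fiberwise (fun p _ => mem_univ p.1)

theorem countOf_insert {M : ℕ} {s : Finset (K × Fin M)} {p : K × Fin M} (hp : p ∉ s) (k : K) :
    countOf (insert p s) k = countOf s k + if p.1 = k then 1 else 0 := by
  unfold countOf
  rw [Finset.filter_insert]
  by_cases h : p.1 = k
  · rw [if_pos h, if_pos h, card_insert_of_notMem (fun hc => hp (mem_filter.1 hc).1)]
  · rw [if_neg h, if_neg h, add_zero]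

theorem countOf_erase {M : ℕ} {s : Finset (K × Fin M)} {p : K × Fin M} (hp : p ∈ s) (k : K) :
    countOf (s.erase p) k = countOf s k - if p.1 = k then 1 else 0 := by
  unfold countOf
  have h : (s.erase p).filter (fun q => q.1 = k) = (s.filter (fun q => q.1 = k)).erase p := by
    ext q
    simp only [mem_filter, mem_erase]
    tauto
  rw [h]
  by_cases hk : p.1 = k
  · rw [if_pos hk, card_erase_of_mem (mem_filter.2 ⟨hp, hk⟩)]
  · rw [if_neg hk]
    have hnm : p ∉ filter (fun q : K × Fin M => q.1 = k) s := fun hc => hk (mem_filter.1 hc).2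
    rw [erase_eq_of_notMem hnm, Nat.sub_zero]

def sOf {M : ℕ} (c : K → ℕ) : Finset (K × Fin M) :=
  univ.filter (fun p => (p.2 : ℕ) < c p.1)

theorem countOf_sOf {M : ℕ} (c : K → ℕ) (k : K) (hk : c k ≤ M) :
    countOf (sOf (M := M) c) k = c k := by
  unfold countOf sOf
  rw [Finset.filter_filter]
  have : Finset.filter (fun p : K × Fin M => (p.2 : ℕ) < c p.1 ∧ p.1 = k) univ =
      Finset.image (fun u : Fin (c k) => (k, Fin.castLE hk u)) univ := by
    apply Finset.Subset.antisymm
    · intro p hp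
      obtain ⟨h1, h2⟩ := (mem_filter.1 hp).2
      subst h2
      exact mem_image.2 ⟨⟨(p.2 : ℕ), h1⟩, mem_univ _, by ext <;> simp⟩
    · intro p hp
      obtain ⟨u, -, rfl⟩ := mem_image.1 hp
      exact mem_filter.2 ⟨mem_univ _, by simp [u.2], rfl⟩
  rw [this, Finset.card_image_of_injective _ (fun u v huv => by
    simpa [Fin.ext_iff] using congrArg (fun q : K × Fin M => (q.2 : ℕ)) huv)]
  simp

theorem count_sym_exchange {N : K → RankFn α} {c c' : K → ℕ} (hc : Feas N c) (hc' : Feas N c')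
    (heq : ∑ k, c k = ∑ k, c' k)
    (hmax : ∀ d, Feas N d → ∑ k, d k ≤ ∑ k, c k)
    {i : K} (hi : c' i < c i) :
    ∃ j, j ≠ i ∧ c j < c' j ∧
      Feas N (Function.update (Function.update c i (c i - 1)) j (c j + 1)) ∧
      Feas N (Function.update (Function.update c' i (c' i + 1)) j (c' j - 1)) := by
  classical
  set M := Fintype.card α with hM
  set Ind : Finset (K × Fin M) → Prop := fun s => Feas N (countOf s) with hInd
  have hempty : Ind ∅ := by
    have : countOf (∅ : Finset (K × Fin M)) = fun _ => 0 := by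
      funext k; unfold countOf; simp
    show Feas N (countOf (∅ : Finset (K × Fin M)))
    rw [this]; exact feas_zero
  have hdown : ∀ s t, Ind s → t ⊆ s → Ind t := by
    intro s t hs hts
    exact feas_mono hs (fun k => card_le_card (Finset.filter_subset_filter _ hts))
  have haug : ∀ X Y, Ind X → Ind Y → X.card < Y.card → ∃ p ∈ Y, p ∉ X ∧ Ind (insert p X) := by
    intro s t hs ht hcard
    rw [card_eq_sum_countOf, card_eq_sum_countOf] at hcard
    obtain ⟨k, hk, hfeas⟩ := feas_augment hs ht hcard
    have hklt : (s.filter (fun p => p.1 = k)).card < (t.filter (fun p => p.1 = k)).card := hk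
    obtain ⟨p, hpt, hps⟩ : ∃ p, p ∈ t.filter (fun p => p.1 = k) ∧
        p ∉ s.filter (fun p => p.1 = k) := by
      by_contra hcon
      push_neg at hcon
      exact absurd (card_le_card (fun p hp => hcon p hp)) (by omega)
    have hpk : p.1 = k := (mem_filter.1 hpt).2
    have hpns : p ∉ s := fun h => hps (mem_filter.2 ⟨h, hpk⟩)
    refine ⟨p, (mem_filter.1 hpt).1, hpns, ?_⟩
    show Feas N (countOf (insert p s))
    have hcnt : countOf (insert p s) = Function.update (countOf s) k (countOf s k + 1) := by
      funext l
      rw [countOf_insert hpns l]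
      by_cases h : l = k
      · subst h; rw [if_pos hpk, Function.update_self]
      · rw [if_neg (fun hc => h (hpk ▸ hc.symm)), Function.update_of_ne h, add_zero]
    rw [hcnt]
    exact hfeas
  set R : RankFn (K × Fin M) := rankFnOf Ind hempty hdown haug with hR
  have hRind : ∀ s, R.Indep s ↔ Ind s := by
    intro s
    rw [Indep]
    exact (rankOf_indep_iff hempty s).symm
  -- encode c and c'
  have hcle : ∀ k, c k ≤ M := fun k => feas_bound hc k
  have hc'le : ∀ k, c' k ≤ M := fun k => feas_bound hc' k
  have hcnt1 : countOf (sOf (M := M) c) = c := funext (fun k => countOf_sOf c k (hcle k))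
  have hcnt2 : countOf (sOf (M := M) c') = c' := funext (fun k => countOf_sOf c' k (hc'le k))
  have hind1 : R.Indep (sOf (M := M) c) := (hRind _).2 (by show Feas N (countOf (sOf (M := M) c)); rw [hcnt1]; exact hc)
  have hind2 : R.Indep (sOf (M := M) c') := (hRind _).2 (by show Feas N (countOf (sOf (M := M) c')); rw [hcnt2]; exact hc')
  have hcard1 : (sOf (M := M) c).card = ∑ k, c k := by rw [card_eq_sum_countOf, hcnt1]
  have hcard2 : (sOf (M := M) c').card = ∑ k, c' k := by rw [card_eq_sum_countOf, hcnt2]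
  have hcardeq : (sOf (M := M) c).card = (sOf (M := M) c').card := by rw [hcard1, hcard2, heq]
  have hmax' : ∀ s, R.Indep s → s.card ≤ (sOf (M := M) c').card := by
    intro s hs
    rw [card_eq_sum_countOf, hcard2, ← heq]
    exact hmax _ ((hRind s).1 hs)
  have hie : c' i < M := lt_of_lt_of_le hi (hcle i)
  set e : K × Fin M := (i, ⟨c' i, hie⟩) with he
  have he1 : e ∈ sOf (M := M) c := mem_filter.2 ⟨mem_univ _, hi⟩
  have he2 : e ∉ sOf (M := M) c' := by
    intro h
    have := (mem_filter.1 h).2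
    simp [he] at this
  obtain ⟨f, hf2, hf1, hex1, hex2⟩ := R.sym_exchange hind1 hind2 hcardeq hmax' he1 he2
  have hfj2 : ((f.2 : ℕ)) < c' f.1 := (mem_filter.1 hf2).2
  have hfj1 : ¬ ((f.2 : ℕ) < c f.1) := fun h => hf1 (mem_filter.2 ⟨mem_univ _, h⟩)
  have hji : f.1 ≠ i := by
    intro h
    rw [h] at hfj2 hfj1
    omega
  have hei : e.1 = i := rfl
  refine ⟨f.1, hji, by omega, ?_, ?_⟩
  · have hfe : f ∉ (sOf (M := M) c).erase e := fun h => hf1 (mem_of_mem_erase h)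
    have hfeas : Feas N (countOf (insert f ((sOf (M := M) c).erase e))) := (hRind _).1 hex1
    have hcnt : countOf (insert f ((sOf (M := M) c).erase e)) =
        Function.update (Function.update c i (c i - 1)) f.1 (c f.1 + 1) := by
      funext l
      rw [countOf_insert hfe l, countOf_erase he1 l, hcnt1, hei]
      by_cases h1 : l = f.1
      · subst h1
        rw [Function.update_self, if_pos rfl, if_neg (fun h : i = f.1 => hji h.symm)]
        have := hcle f.1
        omega
      · rw [Function.update_of_ne h1]
        by_cases h2 : l = i
        · rw [h2, Function.update_self, if_pos rfl, if_neg (fun h : f.1 = i => hji h)]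
          omega
        · rw [Function.update_of_ne h2, if_neg (fun h : i = l => h2 h.symm),
            if_neg (fun h : f.1 = l => h1 h.symm)]
          omega
    rw [hcnt] at hfeas
    exact hfeas
  · have hef : e ∉ (sOf (M := M) c').erase f := fun h => he2 (mem_of_mem_erase h)
    have hfeas : Feas N (countOf (insert e ((sOf (M := M) c').erase f))) := (hRind _).1 hex2
    have hcnt : countOf (insert e ((sOf (M := M) c').erase f)) =
        Function.update (Function.update c' i (c' i + 1)) f.1 (c' f.1 - 1) := by
      funext l
      rw [countOf_insert hef l, countOf_erase hf2 l, hcnt2, hei]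
      by_cases h1 : l = f.1
      · subst h1
        rw [Function.update_self, if_pos rfl, if_neg (fun h : i = f.1 => hji h.symm)]
        omega
      · rw [Function.update_of_ne h1]
        by_cases h2 : l = i
        · rw [h2, Function.update_self, if_pos rfl, if_neg (fun h : f.1 = i => hji h)]
          omega
        · rw [Function.update_of_ne h2, if_neg (fun h : i = l => h2 h.symm),
            if_neg (fun h : f.1 = l => h1 h.symm)]
          omega
    rw [hcnt] at hfeas
    exact hfeas

end CountExchange

section Glue
open RankFn

def Matroidal.toRankFn {m : ℕ} (w : Matroidal m) : RankFn (Fin m) :=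
  ⟨w.v, w.v_empty, w.mono, w.submodular, w.marginal⟩

def freeRankFn (m : ℕ) : RankFn (Fin m) where
  v := card
  v_empty := rfl
  mono := fun {X Y} h => card_le_card h
  submodular := fun X Y => le_of_eq (card_union_add_card_inter X Y)
  marginal := fun X e => card_insert_le e X

theorem exists_max_feas {K : Type*} [Fintype K] [DecidableEq K] {α : Type*} [Fintype α]
    [DecidableEq α] {N : K → RankFn α} :
    ∃ d, Feas N d ∧ ∀ d', Feas N d' → ∑ k, d' k ≤ ∑ k, d k := by
  classical
  set Q : ℕ → Prop := fun t => ∃ d, Feas N d ∧ ∑ k, d k = t with hQ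
  have h0 : Q 0 := ⟨fun _ => 0, feas_zero, by simp⟩
  have hspec : Q (Nat.findGreatest Q (Fintype.card α)) :=
    Nat.findGreatest_spec (Nat.zero_le _) h0
  obtain ⟨d, hd, hdsum⟩ := hspec
  refine ⟨d, hd, ?_⟩
  intro d' hd'
  rw [hdsum]
  exact Nat.le_findGreatest (feas_total hd') ⟨d', hd', rfl⟩

theorem rank_basis {α : Type*} [DecidableEq α] (M : RankFn α) (B : Finset α) :
    ∃ Z ⊆ B, M.Indep Z ∧ Z.card = M.v B := by
  classical
  obtain ⟨Z, hZmem, hZmax⟩ := Finset.exists_max_image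
    (B.powerset.filter (fun T => M.Indep T)) card
    ⟨∅, by simp [M.indep_empty]⟩
  simp only [mem_filter, mem_powerset] at hZmem
  obtain ⟨hZB, hZind⟩ := hZmem
  refine ⟨Z, hZB, hZind, ?_⟩
  have hcl : ∀ e ∈ B, M.v (insert e Z) = M.v Z := by
    intro e he
    by_cases heZ : e ∈ Z
    · rw [insert_eq_self.2 heZ]
    · rcases M.insert_cases Z e with h | h
      · exact h
      · exfalso
        have hind : M.Indep (insert e Z) := by
          rw [Indep, card_insert_of_notMem heZ, h, hZind]
        have : insert e Z ∈ B.powerset.filter (fun T => M.Indep T) := by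
          simp only [mem_filter, mem_powerset]
          exact ⟨insert_subset he hZB, hind⟩
        have := hZmax _ this
        rw [card_insert_of_notMem heZ] at this
        omega
  have h1 : M.v (Z ∪ B) = M.v Z := M.v_union_eq_of_cl hcl
  have h2 : Z ∪ B = B := union_eq_right.2 hZB
  rw [h2] at h1
  rw [h1, hZind]

variable {n m : ℕ} (P : Fin n → Matroidal m)

def NOne (P : Fin n → Matroidal m) : Option (Fin n) → RankFn (Fin m) :=
  fun k => k.elim (freeRankFn m) (fun i => (P i).toRankFn)

def cOf (A : Fin n → Finset (Fin m)) : Option (Fin n) → ℕ :=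
  fun k => k.elim (unalloc A).card (fun i => (A i).card)

theorem sum_cOf {A : Fin n → Finset (Fin m)} (hA : IsAllocation A) :
    ∑ k, cOf A k = m := by
  rw [Fintype.sum_option]
  have h1 : (univ.biUnion A).card = ∑ i, (A i).card :=
    Finset.card_biUnion (fun i _ j _ h => hA i j h)
  have h2 : (unalloc A).card = m - (univ.biUnion A).card := by
    rw [unalloc, card_sdiff_of_subset (subset_univ _), card_univ, Fintype.card_fin]
  have h3 : (univ.biUnion A).card ≤ m := by
    have := card_le_univ (univ.biUnion A)
    rwa [Fintype.card_fin] at this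
  simp only [cOf, Option.elim]
  omega

theorem feas_of_alloc {A : Fin n → Finset (Fin m)} (hA : IsAllocation A) (hC : Clean P A) :
    Feas (NOne P) (cOf A) := by
  refine ⟨fun k => k.elim (unalloc A) A, ?_, ?_, ?_⟩
  · intro k l hkl
    match k, l with
    | none, none => exact absurd rfl hkl
    | none, some j =>
      simp only [Option.elim]
      rw [Finset.disjoint_left]
      intro a ha haj
      exact (mem_sdiff.1 ha).2 (mem_biUnion.2 ⟨j, mem_univ j, haj⟩)
    | some i, none =>
      simp only [Option.elim]
      rw [Finset.disjoint_right]
      intro a ha hai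
      exact (mem_sdiff.1 ha).2 (mem_biUnion.2 ⟨i, mem_univ i, hai⟩)
    | some i, some j =>
      exact hA i j (fun h => hkl (congrArg some h))
  · intro k
    match k with
    | none => rfl
    | some i => exact hC i
  · intro k
    match k with
    | none => rfl
    | some i => rfl

theorem alloc_of_feas {d : Option (Fin n) → ℕ} (hd : Feas (NOne P) d)
    (hsum : ∑ k, d k = m) :
    ∃ A, IsAllocation A ∧ Clean P A ∧ (unalloc A).card = d none ∧
      ∀ i, (A i).card = d (some i) := by
  obtain ⟨X, hdisj, hind, hcard⟩ := hd
  set A : Fin n → Finset (Fin m) := fun i => X (some i) with hA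
  have halloc : IsAllocation A := fun i j hij =>
    hdisj (some i) (some j) (fun h => hij (Option.some_injective _ h))
  refine ⟨A, halloc, fun i => hind (some i), ?_, fun i => hcard (some i)⟩
  have h1 := sum_cOf halloc
  rw [Fintype.sum_option] at h1 hsum
  have h2 : ∀ i, cOf A (some i) = d (some i) := fun i => hcard (some i)
  have h3 : ∑ i, cOf A (some i) = ∑ i, d (some i) := Finset.sum_congr rfl (fun i _ => h2 i)
  have : cOf A none = d none := by omega
  exact this

def NTwo (P : Fin n → Matroidal m) : Fin n → RankFn (Fin m) :=
  fun i => (P i).toRankFn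

theorem max_of_utilopt {A : Fin n → Finset (Fin m)} (hC : Clean P A) (hU : UtilOpt P A) :
    ∀ d, Feas (NTwo P) d → ∑ k, d k ≤ ∑ i, (A i).card := by
  intro d hd
  obtain ⟨X, hdisj, hind, hcard⟩ := hd
  have h1 := hU.2 X hdisj
  have h2 : ∀ i, (P i).v (X i) = d i := fun i => (hcard i) ▸ (hind i)
  calc ∑ k, d k = ∑ i, (P i).v (X i) := Finset.sum_congr rfl (fun i _ => (h2 i).symm)
  _ ≤ ∑ i, (P i).v (A i) := h1
  _ = ∑ i, (A i).card := Finset.sum_congr rfl (fun i _ => hC i)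

theorem utilopt_of_max {d : Fin n → ℕ} (hd : Feas (NTwo P) d)
    (hmax : ∀ d', Feas (NTwo P) d' → ∑ k, d' k ≤ ∑ k, d k) :
    ∃ A, Clean P A ∧ UtilOpt P A ∧ ∀ i, (A i).card = d i := by
  obtain ⟨X, hdisj, hind, hcard⟩ := hd
  refine ⟨X, fun i => hind i, ⟨fun i j h => hdisj i j h, ?_⟩, hcard⟩
  intro B hB
  choose Z hZB hZind hZcard using fun i => rank_basis ((P i).toRankFn) (B i)
  have hfeas : Feas (NTwo P) (fun i => (P i).v (B i)) := by
    refine ⟨Z, ?_, hZind, hZcard⟩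
    intro i j hij
    exact Finset.disjoint_of_subset_left (hZB i)
      (Finset.disjoint_of_subset_right (hZB j) (hB i j hij))
  have h1 := hmax _ hfeas
  have h2 : ∑ i, (P i).v (X i) = ∑ i, d i :=
    Finset.sum_congr rfl (fun i _ => (hcard i) ▸ (hind i))
  calc ∑ i, (P i).v (B i) ≤ ∑ k, d k := h1
  _ = ∑ i, (P i).v (X i) := h2.symm

end Glue

theorem sum_update_update {K : Type*} [Fintype K] [DecidableEq K] (c : K → ℕ) {i j : K}
    (hij : j ≠ i) (hi : 1 ≤ c i) :
    ∑ k, Function.update (Function.update c i (c i - 1)) j (c j + 1) k = ∑ k, c k := by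
  classical
  have hmem : i ∈ univ \ ({j} : Finset K) := by
    rw [mem_sdiff]
    exact ⟨mem_univ i, by simp [Ne.symm hij]⟩
  rw [Finset.sum_update_of_mem (mem_univ j), Finset.sum_update_of_mem hmem]
  have h3 : ∑ k, c k = c j + ∑ k ∈ univ \ {j}, c k :=
    Finset.sum_eq_add_sum_sdiff_singleton_of_mem (mem_univ j) c
  have h2 : ∑ k ∈ univ \ {j}, c k = c i + ∑ k ∈ (univ \ {j}) \ {i}, c k :=
    Finset.sum_eq_add_sum_sdiff_singleton_of_mem hmem c
  omega

theorem sum_update_update' {K : Type*} [Fintype K] [DecidableEq K] (c : K → ℕ) {i j : K}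
    (hij : j ≠ i) (hj : 1 ≤ c j) :
    ∑ k, Function.update (Function.update c i (c i + 1)) j (c j - 1) k = ∑ k, c k := by
  classical
  have hmem : i ∈ univ \ ({j} : Finset K) := by
    rw [mem_sdiff]
    exact ⟨mem_univ i, by simp [Ne.symm hij]⟩
  rw [Finset.sum_update_of_mem (mem_univ j), Finset.sum_update_of_mem hmem]
  have h3 : ∑ k, c k = c j + ∑ k ∈ univ \ {j}, c k :=
    Finset.sum_eq_add_sum_sdiff_singleton_of_mem (mem_univ j) c
  have h2 : ∑ k ∈ univ \ {j}, c k = c i + ∑ k ∈ (univ \ {j}) \ {i}, c k :=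
    Finset.sum_eq_add_sum_sdiff_singleton_of_mem hmem c
  omega

theorem vec_upd {K : Type*} [DecidableEq K] (c : K → ℕ) (i j : K) (hji : j ≠ i)
    (hi : 1 ≤ c i) (k : K) :
    (↑(c k) : ℤ) - (if k = i then 1 else 0) + (if k = j then 1 else 0)
      = ↑(Function.update (Function.update c i (c i - 1)) j (c j + 1) k) := by
  rw [Function.update_apply, Function.update_apply]
  by_cases h1 : k = j
  · subst h1
    rw [if_pos rfl, if_pos rfl, if_neg (fun h : k = i => hji h)]
    push_cast
    omega
  · rw [if_neg h1, if_neg h1]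
    by_cases h2 : k = i
    · subst h2
      rw [if_pos rfl, if_pos rfl]
      omega
    · rw [if_neg h2, if_neg h2]
      omega

theorem vec_upd' {K : Type*} [DecidableEq K] (c : K → ℕ) (i j : K) (hji : j ≠ i)
    (hj : 1 ≤ c j) (k : K) :
    (↑(c k) : ℤ) + (if k = i then 1 else 0) - (if k = j then 1 else 0)
      = ↑(Function.update (Function.update c i (c i + 1)) j (c j - 1) k) := by
  rw [Function.update_apply, Function.update_apply]
  by_cases h1 : k = j
  · subst h1
    rw [if_pos rfl, if_pos rfl, if_neg (fun h : k = i => hji h)]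
    omega
  · rw [if_neg h1, if_neg h1]
    by_cases h2 : k = i
    · subst h2
      rw [if_pos rfl, if_pos rfl]
      push_cast
      omega
    · rw [if_neg h2, if_neg h2]
      omega

theorem sizeVectors_MConvex {n m : ℕ} (P : Fin n → Matroidal m) :
    MConvex {x : Option (Fin n) → ℤ |
        ∃ A : Fin n → Finset (Fin m), IsAllocation A ∧ Clean P A ∧
          x none = ((unalloc A).card : ℤ) ∧ ∀ i : Fin n, x (some i) = ((A i).card : ℤ)} ∧
    MConvex {x : Fin n → ℤ |
        ∃ A : Fin n → Finset (Fin m), Clean P A ∧ UtilOpt P A ∧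
          ∀ i : Fin n, x i = ((A i).card : ℤ)} := by
  classical
  constructor
  · constructor
    · -- nonempty
      refine ⟨fun k => k.elim (m : ℤ) (fun _ => 0), fun _ => ∅, ?_, ?_, ?_, fun i => rfl⟩
      · intro i j _
        exact disjoint_empty_left _
      · intro i
        simp [Clean, (P i).v_empty]
      · have h1 : unalloc (fun _ : Fin n => (∅ : Finset (Fin m))) = univ := by
          ext a
          simp [unalloc]
        rw [h1, card_univ, Fintype.card_fin]
        rfl
    · intro x hx y hy i₀ hi₀
      obtain ⟨A, hAal, hAcl, hxn, hxs⟩ := hx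
      obtain ⟨B, hBal, hBcl, hyn, hys⟩ := hy
      have hxc : ∀ k, x k = (cOf A k : ℤ) := by
        intro k
        match k with
        | none => exact hxn
        | some i => exact hxs i
      have hyc : ∀ k, y k = (cOf B k : ℤ) := by
        intro k
        match k with
        | none => exact hyn
        | some i => exact hys i
      have hfx : Feas (NOne P) (cOf A) := feas_of_alloc P hAal hAcl
      have hfy : Feas (NOne P) (cOf B) := feas_of_alloc P hBal hBcl
      have hsx : ∑ k, cOf A k = m := sum_cOf hAal
      have hsy : ∑ k, cOf B k = m := sum_cOf hBal
      have hilt : cOf B i₀ < cOf A i₀ := by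
        have h := hi₀
        rw [hxc i₀, hyc i₀] at h
        exact_mod_cast h
      have hmax : ∀ d, Feas (NOne P) d → ∑ k, d k ≤ ∑ k, cOf A k := by
        intro d hd
        have h := feas_total hd
        rw [Fintype.card_fin] at h
        omega
      obtain ⟨j, hji, hjlt, hf1, hf2⟩ :=
        count_sym_exchange hfx hfy (by rw [hsx, hsy]) hmax hilt
      have hiA : 1 ≤ cOf A i₀ := by omega
      have hjB : 1 ≤ cOf B j := by omega
      refine ⟨j, ?_, ?_, ?_⟩
      · rw [hxc j, hyc j]
        exact_mod_cast hjlt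
      · obtain ⟨A', hA'al, hA'cl, hA'n, hA's⟩ := alloc_of_feas P hf1
          (by rw [sum_update_update _ hji hiA]; exact hsx)
        refine ⟨A', hA'al, hA'cl, ?_, ?_⟩
        · simp only [Pi.add_apply, Pi.sub_apply, Pi.single_apply, hxc none]
          rw [hA'n]
          exact vec_upd (cOf A) i₀ j hji hiA none
        · intro i
          simp only [Pi.add_apply, Pi.sub_apply, Pi.single_apply, hxc (some i)]
          rw [hA's i]
          exact vec_upd (cOf A) i₀ j hji hiA (some i)
      · obtain ⟨A', hA'al, hA'cl, hA'n, hA's⟩ := alloc_of_feas P hf2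
          (by rw [sum_update_update' _ hji hjB]; exact hsy)
        refine ⟨A', hA'al, hA'cl, ?_, ?_⟩
        · simp only [Pi.add_apply, Pi.sub_apply, Pi.single_apply, hyc none]
          rw [hA'n]
          exact vec_upd' (cOf B) i₀ j hji hjB none
        · intro i
          simp only [Pi.add_apply, Pi.sub_apply, Pi.single_apply, hyc (some i)]
          rw [hA's i]
          exact vec_upd' (cOf B) i₀ j hji hjB (some i)
  · constructor
    · obtain ⟨d, hd, hdmax⟩ := exists_max_feas (N := NTwo P)
      obtain ⟨A, hAcl, hAU, hAcard⟩ := utilopt_of_max P hd hdmax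
      exact ⟨fun i => ((A i).card : ℤ), A, hAcl, hAU, fun i => rfl⟩
    · intro x hx y hy i₀ hi₀
      obtain ⟨A, hAcl, hAU, hxs⟩ := hx
      obtain ⟨B, hBcl, hBU, hys⟩ := hy
      set cA : Fin n → ℕ := fun i => (A i).card with hcA
      set cB : Fin n → ℕ := fun i => (B i).card with hcB
      have hfx : Feas (NTwo P) cA := ⟨A, hAU.1, fun i => hAcl i, fun i => rfl⟩
      have hfy : Feas (NTwo P) cB := ⟨B, hBU.1, fun i => hBcl i, fun i => rfl⟩
      have hmaxA := max_of_utilopt P hAcl hAU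
      have hmaxB := max_of_utilopt P hBcl hBU
      have heq : ∑ k, cA k = ∑ k, cB k :=
        le_antisymm (hmaxB cA hfx) (hmaxA cB hfy)
      have hilt : cB i₀ < cA i₀ := by
        have h := hi₀
        rw [hxs i₀, hys i₀] at h
        exact_mod_cast h
      obtain ⟨j, hji, hjlt, hf1, hf2⟩ :=
        count_sym_exchange hfx hfy heq (fun d hd => (heq ▸ hmaxA d hd)) hilt
      have hiA : 1 ≤ cA i₀ := by omega
      have hjB : 1 ≤ cB j := by omega
      refine ⟨j, ?_, ?_, ?_⟩
      · rw [hxs j, hys j]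
        exact_mod_cast hjlt
      · have hmax1 : ∀ d', Feas (NTwo P) d' → ∑ k, d' k ≤
            ∑ k, Function.update (Function.update cA i₀ (cA i₀ - 1)) j (cA j + 1) k := by
          intro d' hd'
          rw [sum_update_update _ hji hiA]
          exact hmaxA d' hd'
        obtain ⟨A', hA'cl, hA'U, hA'card⟩ := utilopt_of_max P hf1 hmax1
        refine ⟨A', hA'cl, hA'U, ?_⟩
        intro i
        simp only [Pi.add_apply, Pi.sub_apply, Pi.single_apply, hxs i]
        rw [hA'card i]
        exact vec_upd cA i₀ j hji hiA i
      · have hmax2 : ∀ d', Feas (NTwo P) d' → ∑ k, d' k ≤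
            ∑ k, Function.update (Function.update cB i₀ (cB i₀ + 1)) j (cB j - 1) k := by
          intro d' hd'
          rw [sum_update_update' _ hji hjB, ← heq]
          exact hmaxA d' hd'
        obtain ⟨A', hA'cl, hA'U, hA'card⟩ := utilopt_of_max P hf2 hmax2
        refine ⟨A', hA'cl, hA'U, ?_⟩
        intro i
        simp only [Pi.add_apply, Pi.sub_apply, Pi.single_apply, hys i]
        rw [hA'card i]
        exact vec_upd' cB i₀ j hji hjB i
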